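/- Let d, r ≥ 1 and h ≥ 0 be integers and let ε ≥ 0 be a real number with ε·(3·d^{2r}+1)^h ≤ 1. Let K, J, L ⊆ ℕ be pairwise disjoint finite sets with L nonempty, |K ∪ L| ≤ r and |J ∪ L| ≤ r. Let g1, g1' be d-state tensors with index set K ∪ L and g2, g2' be d-state tensors with index set J ∪ L such that every entry of g1 and every entry of g2 has modulus at most 1, ‖g1 − g1'‖ ≤ ε·(3·d^{2r}+1)^h and ‖g2 − g2'‖ ≤ ε·(3·d^{2r}+1)^h. Then every d-state tensor t with index set K ∪ J satisfying ‖t − Contr(g1,g2)‖ ≤ ε also satisfies ‖t − Contr(g1',g2')‖ ≤ ε·(3·d^{2r}+1)^{h+1}. -/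

import Mathlib

/-- The norm of a tensor (a complex-valued array): the supremum of the moduli of its entries. -/
noncomputable def tnorm {α : Type} (g : α → ℂ) : ℝ := ⨆ σ : α, ‖g σ‖

/-- Glue an assignment `τ` on `K ∪ J` with an assignment `σ` on `L` into an
assignment on `K ∪ L` (agreeing with `τ` on `K` and with `σ` on `L`). -/
def glue {d : ℕ} {K J L : Finset ℕ} (τ : ↥(K ∪ J) → Fin d × Fin d)
    (σ : ↥L → Fin d × Fin d) (x : ↥(K ∪ L)) : Fin d × Fin d :=
  if h : (x : ℕ) ∈ K then τ ⟨(x : ℕ), Finset.mem_union_left _ h⟩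
  else σ ⟨(x : ℕ), (Finset.mem_union.mp x.2).resolve_left h⟩

/-- The contraction of a `d`-state tensor `g` with index set `K ∪ L` and a `d`-state
tensor `g'` with index set `J ∪ L` (for `K, J, L` pairwise disjoint), summing over
the shared indices `L`; the result has index set `K ∪ J`. -/
noncomputable def Contr {d : ℕ} (K J L : Finset ℕ)
    (g : (↥(K ∪ L) → Fin d × Fin d) → ℂ)
    (g' : (↥(J ∪ L) → Fin d × Fin d) → ℂ)
    (τ : ↥(K ∪ J) → Fin d × Fin d) : ℂ :=
  ∑ σ : ↥L → Fin d × Fin d,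
    g (glue τ σ) *
    g' (glue (fun x : ↥(J ∪ K) =>
          τ ⟨(x : ℕ), Finset.mem_union.mpr (Finset.mem_union.mp x.2).symm⟩) σ)

lemma tnorm_le' {α : Type} [Fintype α] [Nonempty α] {g : α → ℂ} {c : ℝ}
    (h : ∀ σ, ‖g σ‖ ≤ c) : tnorm g ≤ c := by
  rw [tnorm]; exact ciSup_le h

lemma le_tnorm' {α : Type} [Fintype α] (g : α → ℂ) (σ : α) :
    ‖g σ‖ ≤ tnorm g := by
  rw [tnorm]
  exact le_ciSup (f := fun σ => ‖g σ‖)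
    (Set.Finite.bddAbove (Set.finite_range _)) σ

theorem statement_9 (d r h : ℕ) (hd : 1 ≤ d) (hr : 1 ≤ r) (ε : ℝ) (hε0 : 0 ≤ ε)
    (hsmall : ε * (3 * (d : ℝ) ^ (2 * r) + 1) ^ h ≤ 1)
    (K J L : Finset ℕ)
    (hKJ : Disjoint K J) (hKL : Disjoint K L) (hJL : Disjoint J L)
    (hL : L.Nonempty) (hKr : (K ∪ L).card ≤ r) (hJr : (J ∪ L).card ≤ r)
    (g1 g1' : (↥(K ∪ L) → Fin d × Fin d) → ℂ)
    (g2 g2' : (↥(J ∪ L) → Fin d × Fin d) → ℂ)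
    (hb1 : ∀ σ, ‖g1 σ‖ ≤ 1) (hb2 : ∀ σ, ‖g2 σ‖ ≤ 1)
    (h1 : tnorm (g1 - g1') ≤ ε * (3 * (d : ℝ) ^ (2 * r) + 1) ^ h)
    (h2 : tnorm (g2 - g2') ≤ ε * (3 * (d : ℝ) ^ (2 * r) + 1) ^ h)
    (t : (↥(K ∪ J) → Fin d × Fin d) → ℂ)
    (ht : tnorm (t - Contr K J L g1 g2) ≤ ε) :
    tnorm (t - Contr K J L g1' g2') ≤ ε * (3 * (d : ℝ) ^ (2 * r) + 1) ^ (h + 1) := by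
  haveI : NeZero d := ⟨by omega⟩
  set B : ℝ := 3 * (d : ℝ) ^ (2 * r) + 1 with hB
  have hdr : (1:ℝ) ≤ (d:ℝ) ^ (2 * r) := one_le_pow₀ (by exact_mod_cast hd)
  have hB1 : (1:ℝ) ≤ B := by nlinarith
  have hBh : (1:ℝ) ≤ B ^ h := one_le_pow₀ hB1
  set E : ℝ := ε * B ^ h with hE
  have hE0 : 0 ≤ E := mul_nonneg hε0 (by positivity)
  have hεE : ε ≤ E := le_mul_of_one_le_right hε0 hBh
  have hE1 : E ≤ 1 := hsmall
  have hg1d : ∀ σ, ‖g1 σ - g1' σ‖ ≤ E := fun σ => le_trans (le_tnorm' (g1 - g1') σ) h1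
  have hg2d : ∀ σ, ‖g2 σ - g2' σ‖ ≤ E := fun σ => le_trans (le_tnorm' (g2 - g2') σ) h2
  have hb2' : ∀ σ, ‖g2' σ‖ ≤ 2 := by
    intro σ
    have heq : g2' σ = g2 σ + -(g2 σ - g2' σ) := by ring
    rw [heq]
    calc ‖g2 σ + -(g2 σ - g2' σ)‖
        ≤ ‖g2 σ‖ + ‖-(g2 σ - g2' σ)‖ := norm_add_le _ _
      _ = ‖g2 σ‖ + ‖g2 σ - g2' σ‖ := by rw [norm_neg]
      _ ≤ 1 + E := add_le_add (hb2 σ) (hg2d σ)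
      _ ≤ 2 := by linarith
  have hLr : L.card ≤ r := le_trans (Finset.card_le_card Finset.subset_union_right) hKr
  have hcard : (Fintype.card (↥L → Fin d × Fin d) : ℝ) ≤ (d:ℝ) ^ (2 * r) := by
    have h1' : Fintype.card (↥L → Fin d × Fin d) = (d * d) ^ L.card := by
      simp [Fintype.card_fun]
    rw [h1']
    have hn : (d * d) ^ L.card ≤ d ^ (2 * r) := by
      calc (d * d) ^ L.card = d ^ (2 * L.card) := by
            rw [two_mul, pow_add, mul_pow]
        _ ≤ d ^ (2 * r) := Nat.pow_le_pow_right hd (by omega)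
    exact_mod_cast hn
  refine tnorm_le' (fun τ => ?_)
  set c1 := Contr K J L g1 g2 τ with hc1
  set c2 := Contr K J L g1' g2' τ with hc2
  have hterm : ∀ σ : ↥L → Fin d × Fin d,
      ‖g1 (glue τ σ) * g2 (glue (fun x : ↥(J ∪ K) =>
          τ ⟨(x : ℕ), Finset.mem_union.mpr (Finset.mem_union.mp x.2).symm⟩) σ)
        - g1' (glue τ σ) * g2' (glue (fun x : ↥(J ∪ K) =>
          τ ⟨(x : ℕ), Finset.mem_union.mpr (Finset.mem_union.mp x.2).symm⟩) σ)‖ ≤ 3 * E := by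
    intro σ
    set a := g1 (glue τ σ) with ha
    set a' := g1' (glue τ σ) with ha'
    set b := g2 (glue (fun x : ↥(J ∪ K) =>
          τ ⟨(x : ℕ), Finset.mem_union.mpr (Finset.mem_union.mp x.2).symm⟩) σ) with hb'
    set b' := g2' (glue (fun x : ↥(J ∪ K) =>
          τ ⟨(x : ℕ), Finset.mem_union.mpr (Finset.mem_union.mp x.2).symm⟩) σ) with hb''
    have heq : a * b - a' * b' = a * (b - b') + (a - a') * b' := by ring
    rw [heq]
    have hab1 : ‖a‖ * ‖b - b'‖ ≤ 1 * E :=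
      mul_le_mul (hb1 _) (hg2d _) (norm_nonneg _) zero_le_one
    have hab2 : ‖a - a'‖ * ‖b'‖ ≤ E * 2 :=
      mul_le_mul (hg1d _) (hb2' _) (norm_nonneg _) hE0
    calc ‖a * (b - b') + (a - a') * b'‖
        ≤ ‖a * (b - b')‖ + ‖(a - a') * b'‖ := norm_add_le _ _
      _ = ‖a‖ * ‖b - b'‖ + ‖a - a'‖ * ‖b'‖ := by
          rw [norm_mul, norm_mul]
      _ ≤ 1 * E + E * 2 := add_le_add hab1 hab2
      _ = 3 * E := by ring
  have hcontr : ‖c1 - c2‖ ≤ (d:ℝ) ^ (2 * r) * (3 * E) := by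
    rw [hc1, hc2, Contr, Contr, ← Finset.sum_sub_distrib]
    refine le_trans (norm_sum_le _ _) ?_
    calc (∑ σ : ↥L → Fin d × Fin d, ‖g1 (glue τ σ) * g2 (glue (fun x : ↥(J ∪ K) =>
          τ ⟨(x : ℕ), Finset.mem_union.mpr (Finset.mem_union.mp x.2).symm⟩) σ)
        - g1' (glue τ σ) * g2' (glue (fun x : ↥(J ∪ K) =>
          τ ⟨(x : ℕ), Finset.mem_union.mpr (Finset.mem_union.mp x.2).symm⟩) σ)‖)
        ≤ ∑ _σ : ↥L → Fin d × Fin d, 3 * E := Finset.sum_le_sum (fun σ _ => hterm σ)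
      _ = (Fintype.card (↥L → Fin d × Fin d) : ℝ) * (3 * E) := by
          rw [Finset.sum_const, Finset.card_univ, nsmul_eq_mul]
      _ ≤ (d:ℝ) ^ (2 * r) * (3 * E) := mul_le_mul_of_nonneg_right hcard (by linarith)
  have htτ : ‖t τ - c1‖ ≤ ε :=
    le_trans (le_tnorm' (t - Contr K J L g1 g2) τ) ht
  have heq2 : (t - Contr K J L g1' g2') τ = (t τ - c1) + (c1 - c2) := by
    rw [hc1, hc2]; simp only [Pi.sub_apply]; ring
  rw [heq2]
  calc ‖(t τ - c1) + (c1 - c2)‖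
      ≤ ‖t τ - c1‖ + ‖c1 - c2‖ := norm_add_le _ _
    _ ≤ ε + (d:ℝ) ^ (2 * r) * (3 * E) := add_le_add htτ hcontr
    _ ≤ E + (d:ℝ) ^ (2 * r) * (3 * E) := by linarith
    _ = E * B := by rw [hB]; ring
    _ = ε * B ^ (h + 1) := by rw [hE, pow_succ]; ring
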